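/- Lemma C.2 in abstract Hilbert-space form (projection onto the span of martingale-difference functions). Let (Ω, ℱ, P) be a probability space, n ≥ 1 an integer, and H_1 ⊆ G_1 ⊆ H_2 ⊆ G_2 ⊆ ⋯ ⊆ H_n ⊆ G_n ⊆ ℱ sub-σ-algebras. Let S ⊆ L²(Ω, ℱ, P) be the set of all sums Σ_{t=1}^n ψ_t where each ψ_t ∈ L²(Ω, ℱ, P) is G_t-measurable and satisfies E[ψ_t | H_t] = 0 almost surely. Then S is a closed linear subspace of L²(Ω, ℱ, P), and for every φ ∈ L²(Ω, ℱ, P) the orthogonal projection of φ onto S equals Σ_{t=1}^n (E[φ | G_t] − E[φ | H_t]). -/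

import Mathlib

/-!
Lemma C.2 of Bonhomme, Dano & Graham in abstract Hilbert-space form: the set `S` of
sums of martingale-difference functions `ψ_t` (with `ψ_t` square-integrable,
`G_t`-measurable and `E[ψ_t | H_t] = 0`) is a closed linear subspace of `L²`, and the
orthogonal projection of any `φ ∈ L²` onto `S` is `Σ_t (E[φ | G_t] − E[φ | H_t])`.
-/

open MeasureTheory

noncomputable section


open Filter

namespace LemmaC2Aux

set_option linter.unusedSectionVars false

variable {Ω : Type*} {m m0 : MeasurableSpace Ω} {P : Measure Ω} [IsProbabilityMeasure P]

lemma integrable_mul_L2 {f g : Ω → ℝ} (hf : MemLp f 2 P) (hg : MemLp g 2 P) :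
    Integrable (fun ω => f ω * g ω) P := by
  have h := MeasureTheory.L2.integrable_inner (𝕜 := ℝ) (hf.toLp f) (hg.toLp g)
  refine (integrable_congr ?_).mp h
  filter_upwards [hf.coeFn_toLp, hg.coeFn_toLp] with ω h1 h2
  simp [h1, h2, RCLike.inner_apply, mul_comm]

lemma condexpL2_ae_eq_condexp (hm : m ≤ m0) (f : Lp ℝ 2 P) :
    (condExpL2 ℝ ℝ hm f : Ω → ℝ) =ᵐ[P] P[(f : Ω → ℝ)|m] := by
  refine ae_eq_condExp_of_forall_setIntegral_eq hm ((Lp.memLp f).integrable one_le_two)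
    (fun s _ _ => (integrable_condExpL2_of_isFiniteMeasure hm).integrableOn)
    (fun s hs hμs => integral_condExpL2_eq hm f hs hμs.ne)
    (aestronglyMeasurable_condExpL2 hm f)

lemma memℒp_condexp_two (hm : m ≤ m0) {φ : Ω → ℝ} (hφ : MemLp φ 2 P) :
    MemLp (P[φ|m]) 2 P := by
  have h1 := condexpL2_ae_eq_condexp hm (hφ.toLp φ)
  have h2 : P[((hφ.toLp φ) : Ω → ℝ)|m] =ᵐ[P] P[φ|m] := condExp_congr_ae hφ.coeFn_toLp
  exact (Lp.memLp _).ae_eq (h1.trans h2)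

end LemmaC2Aux

section Chain

variable {Ω : Type*} {m0 : MeasurableSpace Ω} {P : Measure Ω} [IsProbabilityMeasure P]
variable {n : ℕ} {H G : ℕ → MeasurableSpace Ω}

namespace LemmaC2Aux

lemma G_le_H (hHG : ∀ t, 1 ≤ t → t ≤ n → H t ≤ G t)
    (hGH : ∀ t, 1 ≤ t → t < n → G t ≤ H (t + 1))
    {a b : ℕ} (ha : 1 ≤ a) (hb : b ≤ n) (hab : a < b) : G a ≤ H b := by
  induction b with
  | zero => omega
  | succ c ih =>
    rcases eq_or_lt_of_le (Nat.lt_succ_iff.mp hab) with h | h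
    · exact h ▸ hGH a ha (by omega)
    · exact ((ih (by omega) h).trans (hHG c (by omega) (by omega))).trans
        (hGH c (by omega) (by omega))

lemma G_le_G (hHG : ∀ t, 1 ≤ t → t ≤ n → H t ≤ G t)
    (hGH : ∀ t, 1 ≤ t → t < n → G t ≤ H (t + 1))
    {a b : ℕ} (ha : 1 ≤ a) (hb : b ≤ n) (hab : a ≤ b) : G a ≤ G b := by
  rcases eq_or_lt_of_le hab with h | h
  · exact h ▸ le_rfl
  · exact (G_le_H hHG hGH ha hb h).trans (hHG b (by omega) hb)

lemma H_le_H (hHG : ∀ t, 1 ≤ t → t ≤ n → H t ≤ G t)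
    (hGH : ∀ t, 1 ≤ t → t < n → G t ≤ H (t + 1))
    {a b : ℕ} (ha : 1 ≤ a) (hb : b ≤ n) (hab : a ≤ b) : H a ≤ H b := by
  rcases eq_or_lt_of_le hab with h | h
  · exact h ▸ le_rfl
  · exact (hHG a ha (by omega)).trans (G_le_H hHG hGH ha hb h)

end LemmaC2Aux

end Chain

namespace LemmaC2Aux

variable {Ω : Type*} {m0 : MeasurableSpace Ω} {P : Measure Ω} [IsProbabilityMeasure P]
variable {n : ℕ} {H G : ℕ → MeasurableSpace Ω}

lemma condexp_sum_G (hHG : ∀ t, 1 ≤ t → t ≤ n → H t ≤ G t)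
    (hGH : ∀ t, 1 ≤ t → t < n → G t ≤ H (t + 1))
    (hGm : ∀ t, 1 ≤ t → t ≤ n → G t ≤ m0)
    {ψ : ℕ → Ω → ℝ}
    (hψ : ∀ t, 1 ≤ t → t ≤ n →
      MemLp (ψ t) 2 P ∧ StronglyMeasurable[G t] (ψ t) ∧ P[ψ t|H t] =ᵐ[P] 0)
    {t : ℕ} (ht1 : 1 ≤ t) (htn : t ≤ n) :
    P[(fun ω => ∑ s ∈ Finset.Icc 1 n, ψ s ω)|G t] =ᵐ[P]
      fun ω => ∑ s ∈ Finset.Icc 1 t, ψ s ω := by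
  have hint : ∀ s ∈ Finset.Icc 1 n, Integrable (ψ s) P := fun s hs => by
    have h := Finset.mem_Icc.mp hs
    exact ((hψ s h.1 h.2).1).integrable one_le_two
  have hfun : (fun ω => ∑ s ∈ Finset.Icc 1 n, ψ s ω) = ∑ s ∈ Finset.Icc 1 n, ψ s := by
    funext ω; simp
  rw [hfun]
  refine (condExp_finsetSum hint _).trans ?_
  have hterm : ∀ s ∈ Finset.Icc 1 n,
      P[ψ s|G t] =ᵐ[P] (fun ω => if s ≤ t then ψ s ω else 0) := by
    intro s hs
    obtain ⟨hs1, hsn⟩ := Finset.mem_Icc.mp hs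
    by_cases hst : s ≤ t
    · simp only [hst, if_true]
      rw [condExp_of_stronglyMeasurable (hGm t ht1 htn)
        ((hψ s hs1 hsn).2.1.mono (G_le_G hHG hGH hs1 htn hst)) (hint s hs)]
    · push_neg at hst
      have hle : G t ≤ H s := G_le_H hHG hGH ht1 hsn hst
      have h1 : P[ψ s|G t] =ᵐ[P] P[P[ψ s|H s]|G t] :=
        (condExp_condExp_of_le hle ((hHG s hs1 hsn).trans (hGm s hs1 hsn))).symm
      refine (h1.trans (condExp_congr_ae (hψ s hs1 hsn).2.2)).trans ?_
      simp only [hst.not_ge, if_false]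
      rw [condExp_zero]
      exact Filter.EventuallyEq.rfl
  refine (eventuallyEq_sum hterm).trans (Filter.Eventually.of_forall fun ω => ?_)
  simp only [Finset.sum_apply]
  rw [← Finset.sum_filter]
  congr 1
  ext s
  simp only [Finset.mem_filter, Finset.mem_Icc]
  omega

lemma condexp_sum_H (hHG : ∀ t, 1 ≤ t → t ≤ n → H t ≤ G t)
    (hGH : ∀ t, 1 ≤ t → t < n → G t ≤ H (t + 1))
    (hGm : ∀ t, 1 ≤ t → t ≤ n → G t ≤ m0)
    {ψ : ℕ → Ω → ℝ}
    (hψ : ∀ t, 1 ≤ t → t ≤ n →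
      MemLp (ψ t) 2 P ∧ StronglyMeasurable[G t] (ψ t) ∧ P[ψ t|H t] =ᵐ[P] 0)
    {t : ℕ} (ht1 : 1 ≤ t) (htn : t ≤ n) :
    P[(fun ω => ∑ s ∈ Finset.Icc 1 n, ψ s ω)|H t] =ᵐ[P]
      fun ω => ∑ s ∈ Finset.Icc 1 (t - 1), ψ s ω := by
  have hint : ∀ s ∈ Finset.Icc 1 n, Integrable (ψ s) P := fun s hs => by
    have h := Finset.mem_Icc.mp hs
    exact ((hψ s h.1 h.2).1).integrable one_le_two
  have hmH : H t ≤ m0 := (hHG t ht1 htn).trans (hGm t ht1 htn)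
  have hfun : (fun ω => ∑ s ∈ Finset.Icc 1 n, ψ s ω) = ∑ s ∈ Finset.Icc 1 n, ψ s := by
    funext ω; simp
  rw [hfun]
  refine (condExp_finsetSum hint _).trans ?_
  have hterm : ∀ s ∈ Finset.Icc 1 n,
      P[ψ s|H t] =ᵐ[P] (fun ω => if s < t then ψ s ω else 0) := by
    intro s hs
    obtain ⟨hs1, hsn⟩ := Finset.mem_Icc.mp hs
    rcases lt_trichotomy s t with hst | hst | hst
    · simp only [hst, if_true]
      rw [condExp_of_stronglyMeasurable hmH
        ((hψ s hs1 hsn).2.1.mono (G_le_H hHG hGH hs1 htn hst)) (hint s hs)]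
    · subst hst
      refine ((hψ s hs1 hsn).2.2).trans ?_
      simp only [lt_irrefl, if_false]
      exact Filter.EventuallyEq.rfl
    · have hle : H t ≤ H s := H_le_H hHG hGH ht1 hsn hst.le
      have h1 : P[ψ s|H t] =ᵐ[P] P[P[ψ s|H s]|H t] :=
        (condExp_condExp_of_le hle ((hHG s hs1 hsn).trans (hGm s hs1 hsn))).symm
      refine (h1.trans (condExp_congr_ae (hψ s hs1 hsn).2.2)).trans ?_
      simp only [hst.not_gt, if_false]
      rw [condExp_zero]
      exact Filter.EventuallyEq.rfl
  refine (eventuallyEq_sum hterm).trans (Filter.Eventually.of_forall fun ω => ?_)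
  simp only [Finset.sum_apply]
  rw [← Finset.sum_filter]
  congr 1
  ext s
  simp only [Finset.mem_filter, Finset.mem_Icc]
  omega

lemma condexp_sum_diff (hHG : ∀ t, 1 ≤ t → t ≤ n → H t ≤ G t)
    (hGH : ∀ t, 1 ≤ t → t < n → G t ≤ H (t + 1))
    (hGm : ∀ t, 1 ≤ t → t ≤ n → G t ≤ m0)
    {ψ : ℕ → Ω → ℝ}
    (hψ : ∀ t, 1 ≤ t → t ≤ n →
      MemLp (ψ t) 2 P ∧ StronglyMeasurable[G t] (ψ t) ∧ P[ψ t|H t] =ᵐ[P] 0)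
    {t : ℕ} (ht1 : 1 ≤ t) (htn : t ≤ n) :
    (fun ω => (P[(fun ω' => ∑ s ∈ Finset.Icc 1 n, ψ s ω')|G t]) ω
      - (P[(fun ω' => ∑ s ∈ Finset.Icc 1 n, ψ s ω')|H t]) ω) =ᵐ[P] ψ t := by
  filter_upwards [condexp_sum_G hHG hGH hGm hψ ht1 htn,
    condexp_sum_H hHG hGH hGm hψ ht1 htn] with ω hG hH
  rw [hG, hH]
  have ht' : t - 1 + 1 = t := by omega
  have h := Finset.sum_Icc_succ_top (a := 1) (b := t - 1) (by omega) (fun s => ψ s ω)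
  rw [ht'] at h
  rw [h]; ring

end LemmaC2Aux

namespace LemmaC2Aux

variable {Ω : Type*} {m0 : MeasurableSpace Ω} {P : Measure Ω} [IsProbabilityMeasure P]
variable {n : ℕ} {H G : ℕ → MeasurableSpace Ω}

/-- Lemma B: the canonical martingale-difference decomposition of `φ`. -/
lemma psi_phi_spec (hHG : ∀ t, 1 ≤ t → t ≤ n → H t ≤ G t)
    (hGH : ∀ t, 1 ≤ t → t < n → G t ≤ H (t + 1))
    (hGm : ∀ t, 1 ≤ t → t ≤ n → G t ≤ m0)
    {φ : Ω → ℝ} (hφ : MemLp φ 2 P) :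
    ∀ t, 1 ≤ t → t ≤ n →
      MemLp (fun ω => (P[φ|G t]) ω - (P[φ|H t]) ω) 2 P ∧
      StronglyMeasurable[G t] (fun ω => (P[φ|G t]) ω - (P[φ|H t]) ω) ∧
      P[(fun ω => (P[φ|G t]) ω - (P[φ|H t]) ω)|H t] =ᵐ[P] 0 := by
  intro t ht1 htn
  have hmG : G t ≤ m0 := hGm t ht1 htn
  have hmH : H t ≤ m0 := (hHG t ht1 htn).trans hmG
  refine ⟨(memℒp_condexp_two hmG hφ).sub (memℒp_condexp_two hmH hφ), ?_, ?_⟩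
  · exact stronglyMeasurable_condExp.sub
      (stronglyMeasurable_condExp.mono (hHG t ht1 htn))
  · have h1 : P[(fun ω => (P[φ|G t]) ω - (P[φ|H t]) ω)|H t] =ᵐ[P]
        P[P[φ|G t]|H t] - P[P[φ|H t]|H t] :=
      condExp_sub integrable_condExp integrable_condExp _
    have h2 : P[P[φ|G t]|H t] =ᵐ[P] P[φ|H t] :=
      condExp_condExp_of_le (hHG t ht1 htn) hmG
    have h3 : P[P[φ|H t]|H t] = P[φ|H t] :=
      condExp_of_stronglyMeasurable hmH stronglyMeasurable_condExp integrable_condExp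
    rw [h3] at h1
    filter_upwards [h1, h2] with ω e1 e2
    simp only [Pi.sub_apply] at e1
    simp only [Pi.zero_apply, e1, e2, sub_self]

end LemmaC2Aux

namespace LemmaC2Aux

variable {Ω : Type*} {m0 : MeasurableSpace Ω} {P : Measure Ω} [IsProbabilityMeasure P]
variable {n : ℕ} {H G : ℕ → MeasurableSpace Ω}

lemma Lp_coeFn_sum {ι : Type*} (s : Finset ι) (f : ι → Lp ℝ 2 P) :
    ⇑(∑ i ∈ s, f i) =ᵐ[P] fun ω => ∑ i ∈ s, f i ω := by
  classical
  induction s using Finset.induction with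
  | empty => simp only [Finset.sum_empty]; exact Lp.coeFn_zero ℝ 2 P
  | @insert a s ha ih =>
    rw [Finset.sum_insert ha]
    refine (Lp.coeFn_add _ _).trans ?_
    filter_upwards [ih] with ω hω
    simp only [Pi.add_apply, Finset.sum_insert ha, hω]

/-- orthogonality core computation -/
lemma integral_mul_eq_zero_of_condexp_eq {mG mH : MeasurableSpace Ω}
    (hHGt : mH ≤ mG) (hmG : mG ≤ m0)
    {h ψt : Ω → ℝ} (hh : MemLp h 2 P)
    (hGH : P[h|mG] =ᵐ[P] P[h|mH])
    (hψ : MemLp ψt 2 P) (hSM : StronglyMeasurable[mG] ψt) (h0 : P[ψt|mH] =ᵐ[P] 0) :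
    ∫ ω, h ω * ψt ω ∂P = 0 := by
  have hmH : mH ≤ m0 := hHGt.trans hmG
  have i1 : Integrable (fun ω => ψt ω * h ω) P := integrable_mul_L2 hψ hh
  have e1 : P[(fun ω => ψt ω * h ω)|mG] =ᵐ[P] fun ω => ψt ω * (P[h|mG]) ω := by
    have := condExp_mul_of_stronglyMeasurable_left (μ := P) hSM i1 (hh.integrable one_le_two)
    exact this
  have hcH : MemLp (P[h|mH]) 2 P := memℒp_condexp_two hmH hh
  have i2 : Integrable (fun ω => (P[h|mH]) ω * ψt ω) P := integrable_mul_L2 hcH hψ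
  have e2 : P[(fun ω => (P[h|mH]) ω * ψt ω)|mH] =ᵐ[P]
      fun ω => (P[h|mH]) ω * (P[ψt|mH]) ω := by
    have := condExp_mul_of_stronglyMeasurable_left (μ := P) (stronglyMeasurable_condExp (m := mH))
      i2 (hψ.integrable one_le_two)
    exact this
  calc ∫ ω, h ω * ψt ω ∂P
      = ∫ ω, ψt ω * h ω ∂P := by simp_rw [mul_comm]
    _ = ∫ ω, (P[(fun ω => ψt ω * h ω)|mG]) ω ∂P := (integral_condExp hmG).symm
    _ = ∫ ω, (P[h|mH]) ω * ψt ω ∂P := by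
        refine integral_congr_ae ?_
        filter_upwards [e1, hGH] with ω a1 a2
        rw [a1, a2, mul_comm]
    _ = ∫ ω, (P[(fun ω => (P[h|mH]) ω * ψt ω)|mH]) ω ∂P := (integral_condExp hmH).symm
    _ = 0 := by
        rw [← integral_zero Ω ℝ (μ := P)]
        refine integral_congr_ae ?_
        filter_upwards [e2, h0] with ω a1 a2
        rw [a1, a2]
        simp

end LemmaC2Aux

namespace LemmaC2Aux

variable {Ω : Type*} {m0 : MeasurableSpace Ω} {P : Measure Ω} [IsProbabilityMeasure P]
variable {n : ℕ} {H G : ℕ → MeasurableSpace Ω}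

/-- The conditional expectations of `φ - π φ` with respect to `G t` and `H t` agree. -/
lemma condexp_diff_eq (hHG : ∀ t, 1 ≤ t → t ≤ n → H t ≤ G t)
    (hGH : ∀ t, 1 ≤ t → t < n → G t ≤ H (t + 1))
    (hGm : ∀ t, 1 ≤ t → t ≤ n → G t ≤ m0)
    {φ : Ω → ℝ} (hφ : MemLp φ 2 P) {t : ℕ} (ht1 : 1 ≤ t) (htn : t ≤ n) :
    P[(fun ω => φ ω - ∑ s ∈ Finset.Icc 1 n, ((P[φ|G s]) ω - (P[φ|H s]) ω))|G t] =ᵐ[P]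
    P[(fun ω => φ ω - ∑ s ∈ Finset.Icc 1 n, ((P[φ|G s]) ω - (P[φ|H s]) ω))|H t] := by
  have hψφ := psi_phi_spec hHG hGH hGm hφ
  have hπ : MemLp (fun ω => ∑ s ∈ Finset.Icc 1 n,
      ((P[φ|G s]) ω - (P[φ|H s]) ω)) 2 P := by
    refine memLp_finset_sum _ fun s hs => ?_
    obtain ⟨hs1, hsn⟩ := Finset.mem_Icc.mp hs
    exact (hψφ s hs1 hsn).1
  have hmG : G t ≤ m0 := hGm t ht1 htn
  have hmH : H t ≤ m0 := (hHG t ht1 htn).trans hmG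
  have hsubG : P[(fun ω => φ ω - ∑ s ∈ Finset.Icc 1 n,
      ((P[φ|G s]) ω - (P[φ|H s]) ω))|G t] =ᵐ[P]
      P[φ|G t] - P[(fun ω => ∑ s ∈ Finset.Icc 1 n, ((P[φ|G s]) ω - (P[φ|H s]) ω))|G t] :=
    condExp_sub (hφ.integrable one_le_two) (hπ.integrable one_le_two) _
  have hsubH : P[(fun ω => φ ω - ∑ s ∈ Finset.Icc 1 n,
      ((P[φ|G s]) ω - (P[φ|H s]) ω))|H t] =ᵐ[P]
      P[φ|H t] - P[(fun ω => ∑ s ∈ Finset.Icc 1 n, ((P[φ|G s]) ω - (P[φ|H s]) ω))|H t] :=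
    condExp_sub (hφ.integrable one_le_two) (hπ.integrable one_le_two) _
  have hsumG := condexp_sum_G hHG hGH hGm hψφ ht1 htn
  have hsumH := condexp_sum_H hHG hGH hGm hψφ ht1 htn
  filter_upwards [hsubG, hsubH, hsumG, hsumH] with ω a1 a2 a3 a4
  rw [a1, a2]
  simp only [Pi.sub_apply]
  rw [a3, a4]
  have ht' : t - 1 + 1 = t := by omega
  have h := Finset.sum_Icc_succ_top (a := 1) (b := t - 1) (by omega)
    (fun s => (P[φ|G s]) ω - (P[φ|H s]) ω)
  rw [ht'] at h
  rw [h]; ring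

end LemmaC2Aux

namespace LemmaC2Aux

variable {Ω : Type*} {m0 : MeasurableSpace Ω} {P : Measure Ω} [IsProbabilityMeasure P]
variable {n : ℕ} {H G : ℕ → MeasurableSpace Ω}

/-- if `φ =ᵐ Σ ψ_t` for MD functions `ψ`, then the projection formula reproduces `φ`. -/
lemma sum_diff_ae_eq (hHG : ∀ t, 1 ≤ t → t ≤ n → H t ≤ G t)
    (hGH : ∀ t, 1 ≤ t → t < n → G t ≤ H (t + 1))
    (hGm : ∀ t, 1 ≤ t → t ≤ n → G t ≤ m0)
    {ψ : ℕ → Ω → ℝ}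
    (hψ : ∀ t, 1 ≤ t → t ≤ n →
      MemLp (ψ t) 2 P ∧ StronglyMeasurable[G t] (ψ t) ∧ P[ψ t|H t] =ᵐ[P] 0)
    {φ : Ω → ℝ} (hφf : φ =ᵐ[P] fun ω => ∑ t ∈ Finset.Icc 1 n, ψ t ω) :
    φ =ᵐ[P] fun ω => ∑ t ∈ Finset.Icc 1 n, ((P[φ|G t]) ω - (P[φ|H t]) ω) := by
  have hd : ∀ t ∈ Finset.Icc 1 n,
      (fun ω => (P[φ|G t]) ω - (P[φ|H t]) ω) =ᵐ[P] ψ t := by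
    intro t ht
    obtain ⟨ht1, htn⟩ := Finset.mem_Icc.mp ht
    have e1 := condExp_congr_ae (m := G t) (μ := P) hφf
    have e2 := condExp_congr_ae (m := H t) (μ := P) hφf
    have e3 := condexp_sum_diff hHG hGH hGm hψ ht1 htn
    filter_upwards [e1, e2, e3] with ω a1 a2 a3
    rw [a1, a2]
    exact a3
  have hsum : (fun ω => ∑ t ∈ Finset.Icc 1 n, ((P[φ|G t]) ω - (P[φ|H t]) ω)) =ᵐ[P]
      fun ω => ∑ t ∈ Finset.Icc 1 n, ψ t ω := by
    have := eventuallyEq_sum (s := Finset.Icc 1 n) hd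
    filter_upwards [this] with ω hω
    simpa using hω
  exact hφf.trans hsum.symm

end LemmaC2Aux


set_option synthInstance.maxHeartbeats 1000000 in
open LemmaC2Aux in
/-- **Lemma C.2 (projection onto the span of martingale-difference functions).**
Let `H_1 ⊆ G_1 ⊆ H_2 ⊆ G_2 ⊆ ⋯ ⊆ H_n ⊆ G_n ⊆ ℱ` be sub-σ-algebras of a probability
space `(Ω, ℱ, P)` and let `S ⊆ L²(Ω, ℱ, P)` be the set of all sums `Σ_{t=1}^n ψ_t`
with each `ψ_t` square-integrable, `G_t`-measurable and with `E[ψ_t | H_t] = 0` a.s.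
Then `S` is a closed linear subspace of `L²`, and for every `φ ∈ L²`, the function
`Σ_{t=1}^n (E[φ | G_t] − E[φ | H_t])` belongs to `S` and `φ − Σ_t (E[φ|G_t] − E[φ|H_t])`
is orthogonal to every element of `S` — i.e. it is the orthogonal projection of `φ`
onto `S`. -/
theorem lemmaC2_projection
    {Ω : Type*} [m0 : MeasurableSpace Ω] (P : Measure Ω) [IsProbabilityMeasure P]
    (n : ℕ) (hn : 1 ≤ n) (H G : ℕ → MeasurableSpace Ω)
    -- the chain H_1 ⊆ G_1 ⊆ H_2 ⊆ G_2 ⊆ ⋯ ⊆ H_n ⊆ G_n ⊆ ℱ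
    (hHG : ∀ t, 1 ≤ t → t ≤ n → H t ≤ G t)
    (hGH : ∀ t, 1 ≤ t → t < n → G t ≤ H (t + 1))
    (hGm : ∀ t, 1 ≤ t → t ≤ n → G t ≤ m0)
    -- S : the set of sums of martingale-difference functions, as a subset of L²
    (S : Set (Lp ℝ 2 P))
    (hS : S = {f : Lp ℝ 2 P | ∃ ψ : ℕ → Ω → ℝ,
      (∀ t, 1 ≤ t → t ≤ n →
        MemLp (ψ t) 2 P ∧ StronglyMeasurable[G t] (ψ t) ∧ P[ψ t|H t] =ᵐ[P] 0) ∧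
      ⇑f =ᵐ[P] fun ω => ∑ t ∈ Finset.Icc 1 n, ψ t ω}) :
    -- S is a closed linear subspace of L²
    ((0 : Lp ℝ 2 P) ∈ S ∧
      (∀ f g : Lp ℝ 2 P, f ∈ S → g ∈ S → f + g ∈ S) ∧
      (∀ (c : ℝ) (f : Lp ℝ 2 P), f ∈ S → c • f ∈ S) ∧
      IsClosed S) ∧
    -- and the orthogonal projection of any φ ∈ L² onto S is Σ_t (E[φ|G_t] − E[φ|H_t])
    (∀ φ : Ω → ℝ, MemLp φ 2 P →
      ∃ hproj : MemLp (fun ω => ∑ t ∈ Finset.Icc 1 n, ((P[φ|G t]) ω - (P[φ|H t]) ω)) 2 P,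
        hproj.toLp _ ∈ S ∧
        ∀ g ∈ S, (∫ ω, (φ ω - ∑ t ∈ Finset.Icc 1 n, ((P[φ|G t]) ω - (P[φ|H t]) ω)) *
          (g : Lp ℝ 2 P) ω ∂P) = 0) := by
  classical
  subst hS
  -- membership characterization
  have hmem : ∀ f : Lp ℝ 2 P,
      (f ∈ {f : Lp ℝ 2 P | ∃ ψ : ℕ → Ω → ℝ,
        (∀ t, 1 ≤ t → t ≤ n →
          MemLp (ψ t) 2 P ∧ StronglyMeasurable[G t] (ψ t) ∧ P[ψ t|H t] =ᵐ[P] 0) ∧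
        ⇑f =ᵐ[P] fun ω => ∑ t ∈ Finset.Icc 1 n, ψ t ω}) ↔
      ⇑f =ᵐ[P] fun ω => ∑ t ∈ Finset.Icc 1 n, ((P[⇑f|G t]) ω - (P[⇑f|H t]) ω) := by
    intro f
    constructor
    · rintro ⟨ψ, hψ, hf⟩
      exact sum_diff_ae_eq hHG hGH hGm hψ hf
    · intro hf
      exact ⟨fun t ω => (P[⇑f|G t]) ω - (P[⇑f|H t]) ω,
        psi_phi_spec hHG hGH hGm (Lp.memLp f), hf⟩
  constructor
  · refine ⟨?_, ?_, ?_, ?_⟩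
    · -- 0 ∈ S
      refine ⟨fun _ => (0 : Ω → ℝ), fun t ht1 htn => ⟨MemLp.zero, ?_, ?_⟩, ?_⟩
      · exact @stronglyMeasurable_const Ω ℝ (G t) _ 0
      · rw [condExp_zero]
      · refine (Lp.coeFn_zero ℝ 2 P).trans (Filter.Eventually.of_forall fun ω => ?_)
        simp
    · -- addition
      rintro f g ⟨ψf, hψf, hf⟩ ⟨ψg, hψg, hg⟩
      refine ⟨fun t => ψf t + ψg t, fun t ht1 htn => ?_, ?_⟩
      · obtain ⟨h1f, h2f, h3f⟩ := hψf t ht1 htn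
        obtain ⟨h1g, h2g, h3g⟩ := hψg t ht1 htn
        refine ⟨h1f.add h1g, h2f.add h2g, ?_⟩
        refine (condExp_add (h1f.integrable one_le_two)
          (h1g.integrable one_le_two) _).trans ?_
        filter_upwards [h3f, h3g] with ω a1 a2
        simp only [Pi.add_apply, a1, a2, Pi.zero_apply, add_zero]
      · refine (Lp.coeFn_add f g).trans ?_
        filter_upwards [hf, hg] with ω a1 a2
        simp only [Pi.add_apply, a1, a2, ← Finset.sum_add_distrib]
    · -- scalar multiplication
      rintro c f ⟨ψ, hψ, hf⟩
      refine ⟨fun t => c • ψ t, fun t ht1 htn => ?_, ?_⟩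
      · obtain ⟨h1, h2, h3⟩ := hψ t ht1 htn
        refine ⟨h1.const_smul c, h2.const_smul c, ?_⟩
        refine (condExp_smul c (ψ t) _).trans ?_
        filter_upwards [h3] with ω a1
        simp only [Pi.smul_apply, a1, Pi.zero_apply, smul_zero]
      · refine (Lp.coeFn_smul c f).trans ?_
        filter_upwards [hf] with ω a1
        simp only [Pi.smul_apply, a1, smul_eq_mul, Finset.mul_sum]
    · -- closedness
      set T : Lp ℝ 2 P →L[ℝ] Lp ℝ 2 P :=
        ContinuousLinearMap.id ℝ (Lp ℝ 2 P) - ∑ t ∈ Finset.Icc 1 n,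
          (if h : 1 ≤ t ∧ t ≤ n then
            ((lpMeas ℝ ℝ (G t) 2 P).subtypeL.comp (condExpL2 ℝ ℝ (hGm t h.1 h.2))
              - (lpMeas ℝ ℝ (H t) 2 P).subtypeL.comp
                  (condExpL2 ℝ ℝ ((hHG t h.1 h.2).trans (hGm t h.1 h.2))))
          else 0) with hT
      have hTf : ∀ f : Lp ℝ 2 P, ⇑(T f) =ᵐ[P]
          fun ω => f ω - ∑ t ∈ Finset.Icc 1 n, ((P[⇑f|G t]) ω - (P[⇑f|H t]) ω) := by
        intro f
        have h1 : T f = f - ∑ t ∈ Finset.Icc 1 n,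
            (if h : 1 ≤ t ∧ t ≤ n then
              ((lpMeas ℝ ℝ (G t) 2 P).subtypeL.comp (condExpL2 ℝ ℝ (hGm t h.1 h.2))
                - (lpMeas ℝ ℝ (H t) 2 P).subtypeL.comp
                    (condExpL2 ℝ ℝ ((hHG t h.1 h.2).trans (hGm t h.1 h.2))))
            else 0) f := by
          rw [hT]
          simp [ContinuousLinearMap.sub_apply, ContinuousLinearMap.sum_apply]
        rw [h1]
        refine (Lp.coeFn_sub _ _).trans ?_
        have h2 : ∀ t ∈ Finset.Icc 1 n,
            ⇑((if h : 1 ≤ t ∧ t ≤ n then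
              ((lpMeas ℝ ℝ (G t) 2 P).subtypeL.comp (condExpL2 ℝ ℝ (hGm t h.1 h.2))
                - (lpMeas ℝ ℝ (H t) 2 P).subtypeL.comp
                    (condExpL2 ℝ ℝ ((hHG t h.1 h.2).trans (hGm t h.1 h.2))))
            else 0) f) =ᵐ[P]
            fun ω => (P[⇑f|G t]) ω - (P[⇑f|H t]) ω := by
          intro t ht
          obtain ⟨ht1, htn⟩ := Finset.mem_Icc.mp ht
          rw [dif_pos ⟨ht1, htn⟩]
          rw [ContinuousLinearMap.sub_apply]
          refine (Lp.coeFn_sub _ _).trans ?_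
          have e1 := condexpL2_ae_eq_condexp (P := P) (hGm t ht1 htn) f
          have e2 := condexpL2_ae_eq_condexp (P := P) ((hHG t ht1 htn).trans (hGm t ht1 htn)) f
          filter_upwards [e1, e2] with ω a1 a2
          simp only [Pi.sub_apply, ContinuousLinearMap.comp_apply, Submodule.subtypeL_apply]
          rw [← a1, ← a2]
        have h3 := Lp_coeFn_sum (Finset.Icc 1 n)
          (fun t => (if h : 1 ≤ t ∧ t ≤ n then
            ((lpMeas ℝ ℝ (G t) 2 P).subtypeL.comp (condExpL2 ℝ ℝ (hGm t h.1 h.2))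
              - (lpMeas ℝ ℝ (H t) 2 P).subtypeL.comp
                  (condExpL2 ℝ ℝ ((hHG t h.1 h.2).trans (hGm t h.1 h.2))))
          else 0) f)
        have h4 : (fun ω => ∑ t ∈ Finset.Icc 1 n,
            ((if h : 1 ≤ t ∧ t ≤ n then
              ((lpMeas ℝ ℝ (G t) 2 P).subtypeL.comp (condExpL2 ℝ ℝ (hGm t h.1 h.2))
                - (lpMeas ℝ ℝ (H t) 2 P).subtypeL.comp
                    (condExpL2 ℝ ℝ ((hHG t h.1 h.2).trans (hGm t h.1 h.2))))
            else 0) f) ω) =ᵐ[P]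
            fun ω => ∑ t ∈ Finset.Icc 1 n, ((P[⇑f|G t]) ω - (P[⇑f|H t]) ω) := by
          have := eventuallyEq_sum (s := Finset.Icc 1 n) h2
          filter_upwards [this] with ω hω
          simpa using hω
        filter_upwards [h3.trans h4] with ω hω
        simp only [Pi.sub_apply, hω]
      have hS_eq : {f : Lp ℝ 2 P | ∃ ψ : ℕ → Ω → ℝ,
          (∀ t, 1 ≤ t → t ≤ n →
            MemLp (ψ t) 2 P ∧ StronglyMeasurable[G t] (ψ t) ∧ P[ψ t|H t] =ᵐ[P] 0) ∧
          ⇑f =ᵐ[P] fun ω => ∑ t ∈ Finset.Icc 1 n, ψ t ω} = T ⁻¹' {0} := by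
        ext f
        rw [Set.mem_preimage, Set.mem_singleton_iff, hmem f]
        constructor
        · intro h
          apply Lp.ext
          refine (hTf f).trans ?_
          refine Filter.EventuallyEq.trans ?_ (Lp.coeFn_zero ℝ 2 P).symm
          filter_upwards [h] with ω hω
          simp [hω]
        · intro h
          have h5 := hTf f
          rw [h] at h5
          have h6 := (Lp.coeFn_zero ℝ 2 P).symm.trans h5
          filter_upwards [h6] with ω hω
          have : (0 : ℝ) = f ω - ∑ t ∈ Finset.Icc 1 n, ((P[⇑f|G t]) ω - (P[⇑f|H t]) ω) := hω
          linarith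
      rw [hS_eq]
      exact isClosed_singleton.preimage T.continuous
  · -- projection
    intro φ hφ
    have hψφ := psi_phi_spec hHG hGH hGm hφ
    have hproj : MemLp (fun ω => ∑ t ∈ Finset.Icc 1 n,
        ((P[φ|G t]) ω - (P[φ|H t]) ω)) 2 P := by
      refine memLp_finset_sum _ fun t ht => ?_
      obtain ⟨ht1, htn⟩ := Finset.mem_Icc.mp ht
      exact (hψφ t ht1 htn).1
    refine ⟨hproj, ⟨fun t ω => (P[φ|G t]) ω - (P[φ|H t]) ω, hψφ, hproj.coeFn_toLp⟩, ?_⟩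
    rintro g ⟨ψ, hψ, hg⟩
    have hh : MemLp (fun ω => φ ω - ∑ t ∈ Finset.Icc 1 n,
        ((P[φ|G t]) ω - (P[φ|H t]) ω)) 2 P := hφ.sub hproj
    have hint : ∀ t ∈ Finset.Icc 1 n, Integrable (fun ω =>
        (φ ω - ∑ s ∈ Finset.Icc 1 n, ((P[φ|G s]) ω - (P[φ|H s]) ω)) * ψ t ω) P := by
      intro t ht
      obtain ⟨ht1, htn⟩ := Finset.mem_Icc.mp ht
      exact integrable_mul_L2 hh (hψ t ht1 htn).1
    calc ∫ ω, (φ ω - ∑ t ∈ Finset.Icc 1 n, ((P[φ|G t]) ω - (P[φ|H t]) ω)) * g ω ∂P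
        = ∫ ω, (φ ω - ∑ s ∈ Finset.Icc 1 n, ((P[φ|G s]) ω - (P[φ|H s]) ω)) *
            (∑ t ∈ Finset.Icc 1 n, ψ t ω) ∂P := by
          refine integral_congr_ae ?_
          filter_upwards [hg] with ω hω
          rw [hω]
      _ = ∫ ω, ∑ t ∈ Finset.Icc 1 n,
            (φ ω - ∑ s ∈ Finset.Icc 1 n, ((P[φ|G s]) ω - (P[φ|H s]) ω)) * ψ t ω ∂P := by
          simp_rw [Finset.mul_sum]
      _ = ∑ t ∈ Finset.Icc 1 n, ∫ ω,
            (φ ω - ∑ s ∈ Finset.Icc 1 n, ((P[φ|G s]) ω - (P[φ|H s]) ω)) * ψ t ω ∂P :=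
          integral_finset_sum _ hint
      _ = 0 := by
          refine Finset.sum_eq_zero fun t ht => ?_
          obtain ⟨ht1, htn⟩ := Finset.mem_Icc.mp ht
          exact integral_mul_eq_zero_of_condexp_eq (hHG t ht1 htn) (hGm t ht1 htn)
            hh (condexp_diff_eq hHG hGH hGm hφ ht1 htn)
            (hψ t ht1 htn).1 (hψ t ht1 htn).2.1 (hψ t ht1 htn).2.2

end
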